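/- First James–Hopf identity: let G be an abelian bi-Δ-group and 1 ≤ k ≤ n. For every x ∈ 𝔥_k G, p_n(H_{k,n}(x)) = H_{k,n−1}(x) + H_{k−1,n−1}(p_k(x)), i.e., d_0(H_{k,n}(x)) = H_{k,n−1}(x) + H_{k−1,n−1}(d_0 x), with the convention H_{k,n−1} = 0 when k > n−1. -/

import Mathlib

universe u

section

variable (G : ℕ → Type u) [∀ n, AddCommGroup (G n)]
variable (d : ∀ n : ℕ, ℕ → (G (n + 1) →+ G n))
variable (δ : ∀ n : ℕ, ℕ → (G n →+ G (n + 1)))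

/-- The axioms of an (abelian, additively written) bi-Δ-group: a sequence of groups `G n`
with faces `d n j : G (n+1) →+ G n` (for `j ≤ n+1`) and cofaces
`δ n i : G n →+ G (n+1)` (for `i ≤ n+1`), satisfying the simplicial-type identities. -/
structure IsBiDelta : Prop where
  face_face : ∀ n i j : ℕ, i ≤ j → j ≤ n + 1 → ∀ x : G (n + 2),
    d n i (d (n + 1) (j + 1) x) = d n j (d (n + 1) i x)
  coface_coface : ∀ n i j : ℕ, j ≤ i → i ≤ n + 1 → ∀ x : G n,
    δ (n + 1) j (δ n i x) = δ (n + 1) (i + 1) (δ n j x)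
  face_coface_lt : ∀ n i j : ℕ, j ≤ i → i ≤ n + 1 → ∀ x : G (n + 1),
    d (n + 1) j (δ (n + 1) (i + 1) x) = δ n i (d n j x)
  face_coface_eq : ∀ n i : ℕ, i ≤ n + 1 → ∀ x : G n, d n i (δ n i x) = x
  face_coface_gt : ∀ n i j : ℕ, i ≤ j → j ≤ n + 1 → ∀ x : G (n + 1),
    d (n + 1) (j + 1) (δ (n + 1) i x) = δ n i (d n j x)

/-- The `n`-th Cohen group `𝔥_n G = {x ∈ G_n : d_0 x = d_1 x = ⋯ = d_n x}`
(with `𝔥_0 G = G_0`), as a subgroup of `G n`. -/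
def cohenAll : ∀ n : ℕ, AddSubgroup (G n)
  | 0 => ⊤
  | m + 1 =>
    { carrier := { x : G (m + 1) | ∀ j, j ≤ m + 1 → d m j x = d m 0 x }
      add_mem' := fun {a b} ha hb j hj => by
        simp only [Set.mem_setOf_eq] at ha hb ⊢
        rw [map_add, map_add, ha j hj, hb j hj]
      zero_mem' := fun j hj => by simp
      neg_mem' := fun {a} ha j hj => by
        simp only [Set.mem_setOf_eq] at ha ⊢
        rw [map_neg, map_neg, ha j hj] }

/-- The `n`-th Moore cycle group `Z_n G = ⋂_{j=0}^n ker d_j` (with `Z_0 G = G_0`),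
as a subgroup of `G n`. -/
def mooreAll : ∀ n : ℕ, AddSubgroup (G n)
  | 0 => ⊤
  | m + 1 =>
    { carrier := { x : G (m + 1) | ∀ j, j ≤ m + 1 → d m j x = 0 }
      add_mem' := fun {a b} ha hb j hj => by
        simp only [Set.mem_setOf_eq] at ha hb ⊢
        rw [map_add, ha j hj, hb j hj, add_zero]
      zero_mem' := fun j hj => by simp
      neg_mem' := fun {a} ha j hj => by
        simp only [Set.mem_setOf_eq] at ha ⊢
        rw [map_neg, ha j hj, neg_zero] }

/-- Iterated cofaces `d^{c(r-1)} d^{c(r-2)} ⋯ d^{c(0)}(x)` along a tuple `c` of coface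
indices (`c 0` is applied first, at level `k`). -/
def iterCoface (k : ℕ) : ∀ r : ℕ, (Fin r → ℕ) → G k → G (k + r)
  | 0, _, x => x
  | r + 1, c, x => δ (k + r) (c (Fin.last r)) (iterCoface k r (fun i => c i.castSucc) x)

open Classical in
/-- The James–Hopf homomorphism `H_{k,n} : G_k → G_n` (`n = k + r`): the sum, over all
strictly increasing tuples `0 ≤ i_1 < i_2 < ⋯ < i_{n-k} ≤ n`, of
`d^{i_{n-k}} d^{i_{n-k-1}} ⋯ d^{i_1}(x)`. -/
noncomputable def jamesHopf (k r : ℕ) (x : G k) : G (k + r) :=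
  ∑ c ∈ Finset.univ.filter (fun c : Fin r → Fin (k + r + 1) => StrictMono c),
    iterCoface G δ k r (fun i => (c i : ℕ)) x

/-- `σ_{m+1} = H_{m,m+1} = Σ_{i=0}^{m+1} d^i : G m →+ G (m+1)` (as a function). -/
def sigmaMap (m : ℕ) (x : G m) : G (m + 1) :=
  ∑ i ∈ Finset.range (m + 2), δ m i x

/-- The composite `σ_{s+r} ∘ σ_{s+r-1} ∘ ⋯ ∘ σ_{s+1} : G s → G (s+r)`. -/
def sigmaIter (s : ℕ) : ∀ r : ℕ, G s → G (s + r)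
  | 0, x => x
  | r + 1, x => sigmaMap G δ (s + r) (sigmaIter s r x)

/-- The `r`-fold iterate of the zeroth face `d_0 : G (m+r) → G m`,
i.e. `p_{m+1} ∘ p_{m+2} ∘ ⋯ ∘ p_{m+r}` on Cohen groups. -/
def dIter (m : ℕ) : ∀ r : ℕ, G (m + r) → G m
  | 0, x => x
  | r + 1, x => dIter m r (d (m + r) 0 x)

end

section Aux

variable {G : ℕ → Type u} [∀ n, AddCommGroup (G n)]
variable {d : ∀ n : ℕ, ℕ → (G (n + 1) →+ G n)}
variable {δ : ∀ n : ℕ, ℕ → (G n →+ G (n + 1))}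

/-- Transport along an equality of indices, as an `AddMonoidHom`. -/
def tr (G : ℕ → Type u) [∀ n, AddCommGroup (G n)] {m n : ℕ} (e : m = n) : G m →+ G n where
  toFun x := e ▸ x
  map_zero' := by subst e; rfl
  map_add' := by subst e; intro x y; rfl

lemma tr_eq_cast {m n : ℕ} (e : m = n) (x : G m) : tr G e x = cast (congrArg G e) x := by
  subst e; rfl

lemma tr_self {n : ℕ} (e : n = n) (x : G n) : tr G e x = x := rfl

lemma tr_tr {m n p : ℕ} (e1 : m = n) (e2 : n = p) (x : G m) :
    tr G e2 (tr G e1 x) = tr G (e1.trans e2) x := by subst e1; subst e2; rfl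

lemma tr_d {n n' : ℕ} (e : n = n') (j : ℕ) (x : G (n + 1)) :
    tr G e (d n j x) = d n' j (tr G (by rw [e]) x) := by subst e; rfl

lemma tr_coface {n n' : ℕ} (e : n = n') (j : ℕ) (x : G n) :
    tr G (by rw [e] : n + 1 = n' + 1) (δ n j x) = δ n' j (tr G e x) := by subst e; rfl

end Aux

section Aux2

variable {G : ℕ → Type u} [∀ n, AddCommGroup (G n)]
variable {d : ∀ n : ℕ, ℕ → (G (n + 1) →+ G n)}
variable {δ : ∀ n : ℕ, ℕ → (G n →+ G (n + 1))}

lemma sm_add_le {n N : ℕ} {c : Fin n → Fin N} (hc : StrictMono c) :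
    ∀ (k : ℕ) (i j : Fin n), (i : ℕ) + k = (j : ℕ) → (c i : ℕ) + k ≤ (c j : ℕ) := by
  intro k
  induction k with
  | zero => intro i j hij; have : i = j := Fin.ext (by omega); subst this; omega
  | succ k ih =>
    intro i j hij
    have hlt : (i : ℕ) + k < n := by have := j.isLt; omega
    have h1 := ih i ⟨(i : ℕ) + k, hlt⟩ rfl
    have h2 : c ⟨(i : ℕ) + k, hlt⟩ < c j := hc (by simp [Fin.lt_def]; omega)
    have := Fin.lt_def.mp h2
    omega

lemma jamesHopf_zero (k : ℕ) (x : G k) : jamesHopf G δ k 0 x = x := by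
  classical
  rw [jamesHopf]
  have hall : ∀ c ∈ (Finset.univ : Finset (Fin 0 → Fin (k + 0 + 1))), StrictMono c :=
    fun c _ i _ _ => i.elim0
  rw [Finset.filter_true_of_mem hall]
  rw [Fintype.sum_eq_single (fun i : Fin 0 => i.elim0)
    (fun c hc => absurd (funext fun i => i.elim0) hc)]
  rfl

end Aux2

section Aux3

variable {G : ℕ → Type u} [∀ n, AddCommGroup (G n)]
variable {d : ∀ n : ℕ, ℕ → (G (n + 1) →+ G n)}
variable {δ : ∀ n : ℕ, ℕ → (G n →+ G (n + 1))}

lemma push (h : IsBiDelta G d δ) :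
    ∀ (r m : ℕ) (c : Fin r → ℕ), (∀ i, 1 ≤ c i) → (∀ i : Fin r, c i ≤ m + 2 + (i : ℕ)) →
    ∀ x : G (m + 1),
    d (m + r) 0 (tr G (by omega : (m + 1) + r = (m + r) + 1) (iterCoface G δ (m + 1) r c x))
      = iterCoface G δ m r (fun i => c i - 1) (d m 0 x)
  | 0, m, c, h1, h2, x => by
      show d (m + 0) 0 (tr G _ x) = d m 0 x
      rw [tr_self]; rfl
  | r + 1, m, c, h1, h2, x => by
      have e1 : (m + 1) + r = (m + r) + 1 := by omega
      show d ((m + r) + 1) 0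
          (tr G (by omega : ((m + 1) + r) + 1 = ((m + r) + 1) + 1)
            (δ ((m + 1) + r) (c (Fin.last r))
              (iterCoface G δ (m + 1) r (fun i => c i.castSucc) x)))
        = δ (m + r) (c (Fin.last r) - 1)
            (iterCoface G δ m r (fun i : Fin r => c i.castSucc - 1) (d m 0 x))
      rw [tr_coface e1 (c (Fin.last r)) (iterCoface G δ (m + 1) r (fun i => c i.castSucc) x)]
      conv_lhs => rw [show c (Fin.last r) = (c (Fin.last r) - 1) + 1 from by
        have := h1 (Fin.last r); omega]
      rw [h.face_coface_lt (m + r) (c (Fin.last r) - 1) 0 (Nat.zero_le _)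
        (by have := h2 (Fin.last r); simp at this ⊢; omega)]
      rw [push h r m (fun i => c i.castSucc) (fun i => h1 _) (fun i => by
        have := h2 i.castSucc; simpa using this) x]

end Aux3

section Aux4

variable {G : ℕ → Type u} [∀ n, AddCommGroup (G n)]
variable {d : ∀ n : ℕ, ℕ → (G (n + 1) →+ G n)}
variable {δ : ∀ n : ℕ, ℕ → (G n →+ G (n + 1))}

lemma front :
    ∀ (r k : ℕ) (c : Fin (r + 1) → ℕ) (x : G k),
    iterCoface G δ k (r + 1) c x
      = tr G (by omega : (k + 1) + r = k + (r + 1))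
          (iterCoface G δ (k + 1) r (fun i => c i.succ) (δ k (c 0) x))
  | 0, k, c, x => by
      show δ k (c (Fin.last 0)) x = tr G _ (δ k (c 0) x)
      rw [tr_self, Fin.last_zero]
  | r + 1, k, c, x => by
      show δ (k + (r + 1)) (c (Fin.last (r + 1)))
          (iterCoface G δ k (r + 1) (fun i => c i.castSucc) x)
        = tr G (by omega : ((k + 1) + r) + 1 = (k + (r + 1)) + 1)
            (δ ((k + 1) + r) (c (Fin.last r).succ)
              (iterCoface G δ (k + 1) r (fun i : Fin r => c i.castSucc.succ) (δ k (c 0) x)))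
      rw [front r k (fun i => c i.castSucc) x]
      rw [tr_coface (by omega : (k + 1) + r = k + (r + 1)) (c (Fin.last r).succ)
        (iterCoface G δ (k + 1) r (fun i : Fin r => c i.castSucc.succ) (δ k (c 0) x))]
      simp only [Fin.succ_castSucc, Fin.succ_last, Fin.castSucc_zero]

end Aux4


/-- first James–Hopf identity. For an abelian bi-Δ-group `G`,
`1 ≤ k ≤ n` and `x ∈ 𝔥_k G`, one has
`p_n(H_{k,n}(x)) = H_{k,n-1}(x) + H_{k-1,n-1}(p_k(x))`, i.e.
`d_0(H_{k,n}(x)) = H_{k,n-1}(x) + H_{k-1,n-1}(d_0 x)`, with the convention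
`H_{k,n-1} = 0` when `k > n-1`. Here `k = a+1`; the first clause is the case `n = k`
(where `H_{k,n-1} = 0`), the second clause is the case `n = k + s + 1`. -/
theorem stmt7 (G : ℕ → Type u) [∀ n, AddCommGroup (G n)]
    (d : ∀ n : ℕ, ℕ → (G (n + 1) →+ G n)) (δ : ∀ n : ℕ, ℕ → (G n →+ G (n + 1)))
    (h : IsBiDelta G d δ) (a : ℕ) :
    (∀ x ∈ cohenAll G d (a + 1),
      d a 0 (jamesHopf G δ (a + 1) 0 x) = jamesHopf G δ a 0 (d a 0 x)) ∧
    ∀ s : ℕ, ∀ x ∈ cohenAll G d (a + 1),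
      d (a + 1 + s) 0 (jamesHopf G δ (a + 1) (s + 1) x)
        = jamesHopf G δ (a + 1) s x
          + cast (congrArg G (by omega : a + (s + 1) = a + 1 + s))
              (jamesHopf G δ a (s + 1) (d a 0 x)) := by
  classical
  constructor
  · intro x _
    rw [jamesHopf_zero, jamesHopf_zero]
  · intro s x _
    simp only [jamesHopf]
    rw [← tr_eq_cast (show a + (s + 1) = a + 1 + s by omega)]
    simp only [map_sum]
    rw [← Finset.sum_filter_add_sum_filter_not
      (Finset.univ.filter (fun c : Fin (s + 1) → Fin (a + 1 + (s + 1) + 1) => StrictMono c))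
      (fun c => c 0 = 0)]
    refine congrArg₂ (· + ·) ?_ ?_
    · -- part A : tuples with c 0 = 0
      refine Finset.sum_bij'
        (fun c _ => (fun i => ⟨(c i.succ : ℕ) - 1, by have := (c i.succ).isLt; omega⟩ :
          Fin s → Fin (a + 1 + s + 1)))
        (fun c _ => (fun i => Fin.cases ⟨0, by omega⟩
          (fun t => ⟨(c t : ℕ) + 1, by have := (c t).isLt; omega⟩) i :
          Fin (s + 1) → Fin (a + 1 + (s + 1) + 1)))
        ?_ ?_ ?_ ?_ ?_
      · -- membership: image tuple is strictly monotone
        intro c hc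
        simp only [Finset.mem_filter, Finset.mem_univ, true_and] at hc ⊢
        intro i j hij
        have h1 := hc.1 (Fin.succ_lt_succ_iff.mpr hij)
        have hi1 : (1 : ℕ) ≤ (c i.succ : ℕ) := by
          have h0 := hc.1 (Fin.succ_pos i)
          rw [hc.2] at h0
          exact Nat.lt_of_le_of_lt (Nat.zero_le _) (Fin.lt_def.mp h0)
        simp only [Fin.lt_def] at h1 ⊢
        omega
      · -- membership: preimage tuple is strictly monotone with value 0 at 0
        intro c hc
        simp only [Finset.mem_filter, Finset.mem_univ, true_and] at hc ⊢
        constructor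
        · intro i j hij
          induction i using Fin.cases with
          | zero =>
            induction j using Fin.cases with
            | zero => exact absurd hij (lt_irrefl _)
            | succ u => simp [Fin.lt_def]
          | succ t =>
            induction j using Fin.cases with
            | zero => exact absurd hij (by simp [Fin.lt_def])
            | succ u =>
              have : t < u := Fin.succ_lt_succ_iff.mp hij
              have := hc this
              simp only [Fin.lt_def] at this ⊢
              simp only [Fin.cases_succ]
              omega
        · simp
      · -- left inverse
        intro c hc
        simp only [Finset.mem_filter, Finset.mem_univ, true_and] at hc
        funext t
        induction t using Fin.cases with
        | zero =>
          simp only [Fin.cases_zero, hc.2]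
          rfl
        | succ u =>
          have hi1 : (1 : ℕ) ≤ (c u.succ : ℕ) := by
            have h0 := hc.1 (Fin.succ_pos u)
            rw [hc.2] at h0
            exact Nat.lt_of_le_of_lt (Nat.zero_le _) (Fin.lt_def.mp h0)
          simp only [Fin.cases_succ]
          ext
          simp
          omega
      · -- right inverse
        intro c hc
        funext t
        simp only [Fin.cases_succ]
        simp [Fin.ext_iff]
      · -- terms agree
        intro c hc
        simp only [Finset.mem_filter, Finset.mem_univ, true_and] at hc
        obtain ⟨hsm, hc0⟩ := hc
        have hc0' : ((c 0 : Fin (a + 1 + (s + 1) + 1)) : ℕ) = 0 := by rw [hc0]; rfl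
        have h1 : ∀ i : Fin s, 1 ≤ (c i.succ : ℕ) := by
          intro i
          have h0 := hsm (Fin.succ_pos i)
          rw [hc0] at h0
          exact Nat.lt_of_le_of_lt (Nat.zero_le _) (Fin.lt_def.mp h0)
        have h2 : ∀ i : Fin s, (c i.succ : ℕ) ≤ (a + 1) + 2 + (i : ℕ) := by
          intro i
          have hb := sm_add_le hsm (s - ((i : ℕ) + 1)) i.succ (Fin.last s)
            (by simp [Fin.val_succ, Fin.val_last])
          have hlt := (c (Fin.last s)).isLt
          have hi := i.isLt
          omega
        calc d (a + 1 + s) 0 (iterCoface G δ (a + 1) (s + 1) (fun i => ((c i : ℕ))) x)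
            = d (a + 1 + s) 0 (tr G (by omega : ((a + 1) + 1) + s = (a + 1) + (s + 1))
                (iterCoface G δ ((a + 1) + 1) s (fun i => ((c i.succ : ℕ)))
                  (δ (a + 1) ((c 0 : ℕ)) x))) := by
              rw [front s (a + 1) (fun i => ((c i : ℕ))) x]
          _ = d (a + 1 + s) 0 (tr G (by omega : ((a + 1) + 1) + s = (a + 1) + (s + 1))
                (iterCoface G δ ((a + 1) + 1) s (fun i => ((c i.succ : ℕ)))
                  (δ (a + 1) 0 x))) := by rw [hc0']
          _ = iterCoface G δ (a + 1) s (fun i => (c i.succ : ℕ) - 1)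
                (d (a + 1) 0 (δ (a + 1) 0 x)) :=
              push h s (a + 1) (fun i => ((c i.succ : ℕ))) h1 h2 (δ (a + 1) 0 x)
          _ = iterCoface G δ (a + 1) s (fun i => (c i.succ : ℕ) - 1) x := by
              rw [h.face_coface_eq (a + 1) 0 (by omega) x]
    · -- part B : tuples with c 0 ≠ 0
      refine Finset.sum_bij'
        (fun c _ => (fun i => ⟨(c i : ℕ) - 1, by have := (c i).isLt; omega⟩ :
          Fin (s + 1) → Fin (a + (s + 1) + 1)))
        (fun c _ => (fun i => ⟨(c i : ℕ) + 1, by have := (c i).isLt; omega⟩ :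
          Fin (s + 1) → Fin (a + 1 + (s + 1) + 1)))
        ?_ ?_ ?_ ?_ ?_
      · -- membership
        intro c hc
        simp only [Finset.mem_filter, Finset.mem_univ, true_and] at hc ⊢
        obtain ⟨hsm, hc0⟩ := hc
        have hz : (c 0 : ℕ) ≠ 0 := fun hh => hc0 (by ext; simpa using hh)
        intro i j hij
        have h1 := hsm hij
        have h0 : c 0 ≤ c i := hsm.monotone (Fin.zero_le i)
        simp only [Fin.lt_def] at h1 ⊢
        simp only [Fin.le_def] at h0
        omega
      · -- membership back
        intro c hc
        simp only [Finset.mem_filter, Finset.mem_univ, true_and] at hc ⊢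
        constructor
        · intro i j hij
          have := hc hij
          simp only [Fin.lt_def] at this ⊢
          omega
        · intro hh
          have := congrArg Fin.val hh
          simp at this
      · -- left inverse
        intro c hc
        simp only [Finset.mem_filter, Finset.mem_univ, true_and] at hc
        obtain ⟨hsm, hc0⟩ := hc
        have hz : (c 0 : ℕ) ≠ 0 := fun hh => hc0 (by ext; simpa using hh)
        funext t
        have h0 : c 0 ≤ c t := hsm.monotone (Fin.zero_le t)
        simp only [Fin.le_def] at h0
        ext
        simp
        omega
      · -- right inverse
        intro c hc
        funext t
        ext
        simp
      · -- terms agree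
        intro c hc
        simp only [Finset.mem_filter, Finset.mem_univ, true_and] at hc
        obtain ⟨hsm, hc0⟩ := hc
        have hz : (c 0 : ℕ) ≠ 0 := fun hh => hc0 (by ext; simpa using hh)
        have h1 : ∀ i : Fin (s + 1), 1 ≤ (c i : ℕ) := by
          intro i
          have h0 : c 0 ≤ c i := hsm.monotone (Fin.zero_le i)
          simp only [Fin.le_def] at h0
          omega
        have h2 : ∀ i : Fin (s + 1), (c i : ℕ) ≤ a + 2 + (i : ℕ) := by
          intro i
          have hb := sm_add_le hsm (s - (i : ℕ)) i (Fin.last s)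
            (by simp [Fin.val_last]; omega)
          have hlt := (c (Fin.last s)).isLt
          have hi := i.isLt
          omega
        have e0 : (a + 1) + (s + 1) = (a + (s + 1)) + 1 := by omega
        have e1 : (a + (s + 1)) + 1 = (a + 1 + s) + 1 := by omega
        have pf : a + (s + 1) = a + 1 + s := by omega
        have hww : tr G e1 (tr G e0 (iterCoface G δ (a + 1) (s + 1) (fun i => ((c i : ℕ))) x))
            = iterCoface G δ (a + 1) (s + 1) (fun i => ((c i : ℕ))) x :=
          (tr_tr e0 e1 _).trans (tr_self (e0.trans e1) _)
        refine Eq.trans (b := tr G pf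
          (iterCoface G δ a (s + 1) (fun i => (c i : ℕ) - 1) (d a 0 x))) ?_ rfl
        calc d (a + 1 + s) 0 (iterCoface G δ (a + 1) (s + 1) (fun i => ((c i : ℕ))) x)
            = d (a + 1 + s) 0 (tr G e1
                (tr G e0 (iterCoface G δ (a + 1) (s + 1) (fun i => ((c i : ℕ))) x))) := by
              rw [hww]
          _ = tr G pf (d (a + (s + 1)) 0
                (tr G e0 (iterCoface G δ (a + 1) (s + 1) (fun i => ((c i : ℕ))) x))) :=
              (tr_d pf 0 _).symm
          _ = tr G pf (iterCoface G δ a (s + 1) (fun i => (c i : ℕ) - 1) (d a 0 x)) := by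
              rw [push h (s + 1) a (fun i => ((c i : ℕ))) h1 h2 x]
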